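/- arXiv:2605.31373 — 2 statements merged into one kernel-verified Lean document; each statement's English description precedes it below -/
import Mathlib

section
/- A simple graph on n vertices contains at most 3^{n/3} maximal cliques; equivalently, if m denotes the number of maximal cliques of a finite simple graph G on n vertices, then m^3 ≤ 3^n. -/
open Finset

private lemma cube_le_three_pow : ∀ k : ℕ, 1 ≤ k → k ^ 3 ≤ 3 ^ k := by
  intro k
  induction k with
  | zero => omega
  | succ k ih =>
    intro _
    rcases Nat.lt_or_ge k 3 with h | h
    · interval_cases k <;> norm_num
    · have h1 : 1 ≤ k := by omega
      have hk3 := ih h1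
      have h9 : 9 ≤ k * k := Nat.mul_le_mul h h
      calc (k + 1) ^ 3 ≤ 3 * k ^ 3 := by nlinarith [h, h9]
        _ ≤ 3 * 3 ^ k := by nlinarith
        _ = 3 ^ (k + 1) := by ring

private lemma maxclique_set_of_isEmpty {V : Type*} [IsEmpty V] (G : SimpleGraph V) :
    {s : Finset V | G.IsClique (s : Set V) ∧
        ∀ t : Finset V, G.IsClique (t : Set V) → s ⊆ t → t = s} = {(∅ : Finset V)} := by
  have hall : ∀ s : Finset V, s = ∅ := fun s => Finset.eq_empty_of_isEmpty s
  ext s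
  simp only [Set.mem_setOf_eq, Set.mem_singleton_iff]
  constructor
  · intro _; exact hall s
  · intro h
    subst h
    exact ⟨by simp, fun t _ _ => hall t⟩

universe u

private lemma moon_moser_aux (n : ℕ) :
    ∀ {V : Type u} [Fintype V] (G : SimpleGraph V), Fintype.card V ≤ n →
      {s : Finset V | G.IsClique (s : Set V) ∧
          ∀ t : Finset V, G.IsClique (t : Set V) → s ⊆ t → t = s}.ncard ^ 3
        ≤ 3 ^ Fintype.card V := by
  induction n with
  | zero =>
    intro V _ G hcard
    have : IsEmpty V := Fintype.card_eq_zero_iff.mp (Nat.le_zero.mp hcard)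
    rw [maxclique_set_of_isEmpty, Set.ncard_singleton, Nat.le_zero.mp hcard]
    norm_num
  | succ n ih =>
    intro V _ G hcard
    classical
    rcases isEmpty_or_nonempty V with hV | hV
    · rw [maxclique_set_of_isEmpty, Set.ncard_singleton]
      simp
    -- setup
    set P : Finset V → Prop := fun s => G.IsClique (s : Set V) ∧
        ∀ t : Finset V, G.IsClique (t : Set V) → s ⊆ t → t = s with hPdef
    set S : Finset (Finset V) := Finset.univ.filter P with hSdef
    have hset : {s : Finset V | P s} = (↑S : Set (Finset V)) := by
      ext s; simp [hSdef]
    rw [show {s : Finset V | G.IsClique (s : Set V) ∧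
          ∀ t : Finset V, G.IsClique (t : Set V) → s ⊆ t → t = s} = {s : Finset V | P s} from rfl,
        hset, Set.ncard_coe_finset]
    -- choose vertex of max degree
    obtain ⟨v, -, hv⟩ := Finset.exists_max_image Finset.univ
      (fun u => (G.neighborSet u).toFinset.card) Finset.univ_nonempty
    set U : Finset V := ((G.neighborSet v).toFinset)ᶜ with hUdef
    have hvU : v ∈ U := by
      simp [hUdef, Set.mem_toFinset]
    have hU1 : 1 ≤ U.card := Finset.card_pos.mpr ⟨v, hvU⟩
    have hUcard : U.card + (G.neighborSet v).toFinset.card = Fintype.card V := by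
      rw [hUdef, Finset.card_compl]
      exact Nat.sub_add_cancel (Finset.card_le_univ _)
    -- every maximal clique meets U
    have hmeet : ∀ C ∈ S, ∃ u ∈ U, u ∈ C := by
      intro C hC
      rw [hSdef, Finset.mem_filter] at hC
      obtain ⟨-, hclique, hmax⟩ := hC
      by_contra h
      push_neg at h
      have hsub : ∀ x ∈ C, G.Adj v x := by
        intro x hx
        have hxU : x ∉ U := fun hxU => h x hxU hx
        simp only [hUdef, Finset.mem_compl, not_not, Set.mem_toFinset,
          SimpleGraph.mem_neighborSet] at hxU
        exact hxU
      have hvC : v ∉ C := fun hvC => G.irrefl (hsub v hvC)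
      have hins : G.IsClique (↑(insert v C) : Set V) := by
        rw [Finset.coe_insert]
        exact hclique.insert (fun b hb _ => hsub b hb)
      have heq := hmax (insert v C) hins (Finset.subset_insert _ _)
      exact hvC (heq ▸ Finset.mem_insert_self v C)
    -- bound on maximal cliques containing a given vertex u
    have hbound : ∀ u : V,
        ((S.filter (fun C => u ∈ C)).card) ^ 3 ≤ 3 ^ (G.neighborSet u).toFinset.card := by
      intro u
      set W := ↥(G.neighborSet u)
      set G' : SimpleGraph W := G.comap ((↑) : W → V) with hG'def
      have hcardW : Fintype.card W = (G.neighborSet u).toFinset.card :=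
        (Set.toFinset_card _).symm
      have hWle : Fintype.card W ≤ n := by
        rw [hcardW]
        have h1 : (G.neighborSet u).toFinset.card ≤ (G.neighborSet v).toFinset.card :=
          hv u (Finset.mem_univ u)
        omega
      have hIH := ih G' hWle
      set P' : Finset W → Prop := fun s => G'.IsClique (s : Set W) ∧
          ∀ t : Finset W, G'.IsClique (t : Set W) → s ⊆ t → t = s with hP'def
      have hset' : {s : Finset W | P' s} = (↑(Finset.univ.filter P') : Set (Finset W)) := by
        ext s; simp
      rw [show {s : Finset W | G'.IsClique (s : Set W) ∧
            ∀ t : Finset W, G'.IsClique (t : Set W) → s ⊆ t → t = s} = {s : Finset W | P' s}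
            from rfl, hset', Set.ncard_coe_finset] at hIH
      refine le_trans (Nat.pow_le_pow_left ?_ 3) (le_trans hIH (by rw [hcardW]))
      -- injection from max cliques containing u into max cliques of G'
      apply Finset.card_le_card_of_injOn (fun C => C.subtype (· ∈ G.neighborSet u))
      · -- maps into the filter
        intro C hC
        rw [Finset.mem_coe, Finset.mem_filter] at hC
        obtain ⟨hCS, huC⟩ := hC
        rw [hSdef, Finset.mem_filter] at hCS
        obtain ⟨-, hclique, hmax⟩ := hCS
        have hCN : ∀ x ∈ C, x ≠ u → x ∈ G.neighborSet u := by
          intro x hx hxu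
          exact (hclique huC hx (Ne.symm hxu))
        rw [Finset.mem_coe, Finset.mem_filter]
        refine ⟨Finset.mem_univ _, ?_, ?_⟩
        · -- clique
          intro a ha b hb hab
          have ha' : (a : V) ∈ C := Finset.mem_subtype.mp (Finset.mem_coe.mp ha)
          have hb' : (b : V) ∈ C := Finset.mem_subtype.mp (Finset.mem_coe.mp hb)
          exact hclique ha' hb' (fun h => hab (Subtype.ext h))
        · -- maximal
          intro t ht hsub
          have hmapC : G.IsClique (↑(insert u (t.image (Subtype.val))) : Set V) := by
            rw [Finset.coe_insert]
            apply SimpleGraph.IsClique.insert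
            · intro a ha b hb hab
              simp only [Finset.coe_image, Set.mem_image, Finset.mem_coe] at ha hb
              obtain ⟨a', ha', rfl⟩ := ha
              obtain ⟨b', hb', rfl⟩ := hb
              exact ht ha' hb' (fun h => hab (congrArg Subtype.val h))
            · intro b hb hub
              simp only [Finset.coe_image, Set.mem_image, Finset.mem_coe] at hb
              obtain ⟨b', hb', rfl⟩ := hb
              exact b'.2
          have hCsub : C ⊆ insert u (t.image Subtype.val) := by
            intro x hx
            by_cases hxu : x = u
            · subst hxu; exact Finset.mem_insert_self _ _
            · have hxN := hCN x hx hxu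
              have : (⟨x, hxN⟩ : W) ∈ C.subtype (· ∈ G.neighborSet u) := by
                rw [Finset.mem_subtype]; exact hx
              have : (⟨x, hxN⟩ : W) ∈ t := hsub this
              exact Finset.mem_insert_of_mem (Finset.mem_image_of_mem _ this)
          have heq := hmax _ hmapC hCsub
          -- now show t = C.subtype
          apply Finset.Subset.antisymm _ hsub
          intro a ha
          rw [Finset.mem_subtype]
          have : (a : V) ∈ insert u (t.image Subtype.val) :=
            Finset.mem_insert_of_mem (Finset.mem_image_of_mem _ ha)
          rw [heq] at this
          exact this
      · -- injective on the filter
        intro C1 h1 C2 h2 heq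
        have heq' : C1.subtype (· ∈ G.neighborSet u) = C2.subtype (· ∈ G.neighborSet u) := heq
        rw [Finset.mem_coe, Finset.mem_filter] at h1 h2
        obtain ⟨hC1S, hu1⟩ := h1
        obtain ⟨hC2S, hu2⟩ := h2
        rw [hSdef, Finset.mem_filter] at hC1S hC2S
        have hmem : ∀ (C : Finset V), u ∈ C → G.IsClique (↑C : Set V) →
            ∀ x ∈ C, x ≠ u → x ∈ G.neighborSet u := by
          intro C huC hcl x hx hxu
          exact hcl huC hx (Ne.symm hxu)
        ext x
        constructor
        · intro hx
          by_cases hxu : x = u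
          · subst hxu; exact hu2
          · have hxN := hmem C1 hu1 hC1S.2.1 x hx hxu
            have : (⟨x, hxN⟩ : W) ∈ C1.subtype (· ∈ G.neighborSet u) := by
              rw [Finset.mem_subtype]; exact hx
            rw [heq', Finset.mem_subtype] at this
            exact this
        · intro hx
          by_cases hxu : x = u
          · subst hxu; exact hu1
          · have hxN := hmem C2 hu2 hC2S.2.1 x hx hxu
            have : (⟨x, hxN⟩ : W) ∈ C2.subtype (· ∈ G.neighborSet u) := by
              rw [Finset.mem_subtype]; exact hx
            rw [← heq', Finset.mem_subtype] at this
            exact this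
    -- combine
    obtain ⟨u0, hu0U, hu0⟩ := Finset.exists_max_image U
      (fun u => (S.filter (fun C => u ∈ C)).card) ⟨v, hvU⟩
    set m0 := (S.filter (fun C => u0 ∈ C)).card with hm0
    have hScard : S.card ≤ U.card * m0 := by
      have hsubB : S ⊆ U.biUnion (fun u => S.filter (fun C => u ∈ C)) := by
        intro C hC
        obtain ⟨u, huU, huC⟩ := hmeet C hC
        exact Finset.mem_biUnion.2 ⟨u, huU, Finset.mem_filter.2 ⟨hC, huC⟩⟩
      calc S.card ≤ (U.biUnion (fun u => S.filter (fun C => u ∈ C))).card :=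
            Finset.card_le_card hsubB
        _ ≤ ∑ u ∈ U, (S.filter (fun C => u ∈ C)).card := Finset.card_biUnion_le
        _ ≤ U.card * m0 := by
            rw [← smul_eq_mul]
            exact Finset.sum_le_card_nsmul _ _ _ (fun u hu => hu0 u hu)
    have hUpos : 1 ≤ U.card := Finset.card_pos.mpr ⟨v, hvU⟩
    have hm0cube : m0 ^ 3 ≤ 3 ^ (G.neighborSet v).toFinset.card := by
      refine le_trans (hbound u0) (Nat.pow_le_pow_right (by norm_num) ?_)
      exact hv u0 (Finset.mem_univ u0)
    calc S.card ^ 3 ≤ (U.card * m0) ^ 3 := Nat.pow_le_pow_left hScard 3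
      _ = U.card ^ 3 * m0 ^ 3 := by ring
      _ ≤ 3 ^ U.card * 3 ^ (G.neighborSet v).toFinset.card :=
          Nat.mul_le_mul (cube_le_three_pow _ hUpos) hm0cube
      _ = 3 ^ (U.card + (G.neighborSet v).toFinset.card) := (pow_add 3 _ _).symm
      _ = 3 ^ Fintype.card V := by rw [hUcard]

/-- Moon–Moser bound: a finite simple graph on `n` vertices has at most `3 ^ (n / 3)`
maximal cliques; equivalently, the cube of the number of maximal cliques is at most `3 ^ n`. -/
theorem moon_moser_maximal_clique_bound {V : Type*} [Fintype V]
    (G : SimpleGraph V)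
    (m : ℕ)
    (hm : m = {s : Finset V | G.IsClique (s : Set V) ∧
        ∀ t : Finset V, G.IsClique (t : Set V) → s ⊆ t → t = s}.ncard) :
    m ^ 3 ≤ 3 ^ Fintype.card V := by
  subst hm
  exact moon_moser_aux (Fintype.card V) G le_rfl
end

section
/- Let G be a finite simple graph in which every edge is contained in exactly one maximal clique, let v be a vertex of G, and let c be any function from the vertices of G to a set of colors. Then the sum, over all maximal cliques σ of G containing v, of the multisets {{c(w) : w ∈ σ \ {v}}} equals the multiset {{c(w) : w ∈ N(v)}} of neighbor colors of v. -/
open scoped Classical in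
/-- In a finite simple graph where every edge lies in exactly one maximal clique, for any
vertex `v` and coloring `c`, the sum over the maximal cliques `σ` containing `v` of the
color multisets `{{c w : w ∈ σ \ {v}}}` equals the multiset of neighbor colors of `v`. -/
theorem maximalCliques_color_multiset_eq_neighbors {V α : Type*} [Fintype V]
    (G : SimpleGraph V)
    (MaxClique : Finset V → Prop)
    (hMax : ∀ σ : Finset V, MaxClique σ ↔
      G.IsClique (σ : Set V) ∧ ∀ τ : Finset V, G.IsClique (τ : Set V) → σ ⊆ τ → τ = σ)
    (hedge : ∀ u w : V, G.Adj u w →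
      ∃! σ : Finset V, MaxClique σ ∧ u ∈ σ ∧ w ∈ σ)
    (v : V) (c : V → α) :
    (∑ σ ∈ Finset.univ.filter (fun σ : Finset V => MaxClique σ ∧ v ∈ σ),
        (σ.erase v).val.map c) = (G.neighborFinset v).val.map c := by
  have key : (∑ σ ∈ Finset.univ.filter (fun σ : Finset V => MaxClique σ ∧ v ∈ σ),
      (σ.erase v).val) = (G.neighborFinset v).val := by
    ext w
    rw [Multiset.count_sum']
    have hterm : ∀ σ : Finset V, Multiset.count w (σ.erase v).val
        = if w ∈ σ.erase v then 1 else 0 := by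
      intro σ
      split
      · exact Multiset.count_eq_one_of_mem (σ.erase v).nodup ‹_›
      · exact Multiset.count_eq_zero_of_notMem ‹_›
    simp only [hterm, ← Finset.card_filter]
    by_cases hw : w ∈ G.neighborFinset v
    · have hadj : G.Adj v w := by simpa using hw
      rw [Multiset.count_eq_one_of_mem (G.neighborFinset v).nodup hw]
      obtain ⟨σ₀, ⟨hσ₀, hv₀, hw₀⟩, huniq⟩ := hedge v w hadj
      rw [Finset.card_eq_one]
      refine ⟨σ₀, Finset.eq_singleton_iff_unique_mem.mpr ⟨?_, ?_⟩⟩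
      · simp only [Finset.mem_filter, Finset.mem_univ, true_and]
        exact ⟨⟨hσ₀, hv₀⟩, Finset.mem_erase.mpr ⟨hadj.ne', hw₀⟩⟩
      · intro σ hσ
        simp only [Finset.mem_filter, Finset.mem_univ, true_and] at hσ
        exact huniq σ ⟨hσ.1.1, hσ.1.2, Finset.mem_erase.mp hσ.2 |>.2⟩
    · rw [Multiset.count_eq_zero_of_notMem hw]
      rw [Finset.card_eq_zero, Finset.filter_filter, Finset.filter_eq_empty_iff]
      intro σ _ h
      obtain ⟨⟨h1, hvσ⟩, hwe⟩ := h
      obtain ⟨hcl, -⟩ := (hMax σ).mp h1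
      obtain ⟨hne, hwσ⟩ := Finset.mem_erase.mp hwe
      have : G.Adj v w := hcl (Finset.mem_coe.mpr hvσ) (Finset.mem_coe.mpr hwσ) (Ne.symm hne)
      exact hw (by simpa using this)
  calc (∑ σ ∈ Finset.univ.filter (fun σ : Finset V => MaxClique σ ∧ v ∈ σ),
        (σ.erase v).val.map c)
      = (Multiset.mapAddMonoidHom c) (∑ σ ∈ Finset.univ.filter
          (fun σ : Finset V => MaxClique σ ∧ v ∈ σ), (σ.erase v).val) := by
        rw [map_sum]; rfl
    _ = (G.neighborFinset v).val.map c := by rw [key]; rfl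
end
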